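/- Let u, w ∈ ℝ^d with ‖u‖ = 1 and ‖w - u‖ ≤ 2γ for some 0 ≤ γ < 1/2, w ≠ 0. Then the sine of the angle between w and u is at most 2γ; consequently ⟨w, u⟩ ≥ ‖w‖ √(1 - 4γ²). -/
import Mathlib


open RealInnerProductSpace InnerProductGeometry

theorem tilted_edge_estimate
    (d : ℕ) (u w : EuclideanSpace ℝ (Fin d))
    (hu : ‖u‖ = 1) (γ : ℝ) (hγ : 0 ≤ γ) (hγ2 : γ < 1 / 2)
    (hwu : ‖w - u‖ ≤ 2 * γ) (hw : w ≠ 0) :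
    Real.sin (angle w u) ≤ 2 * γ ∧ ‖w‖ * Real.sqrt (1 - 4 * γ ^ 2) ≤ ⟪w, u⟫ := by
  have ha0 : 0 < ‖w‖ := norm_pos_iff.mpr hw
  have hns : ‖w - u‖ ^ 2 = ‖w‖ ^ 2 - 2 * ⟪w, u⟫ + 1 := by
    rw [@norm_sub_sq_real, hu]; ring
  have hs0 : (0:ℝ) ≤ ‖w - u‖ := norm_nonneg _
  have hs2 : ‖w - u‖ ^ 2 ≤ 4 * γ ^ 2 := by nlinarith
  have htpos : 0 < ⟪w, u⟫ := by nlinarith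
  have key : ‖w‖ ^ 2 - ⟪w, u⟫ ^ 2 ≤ ‖w‖ ^ 2 * (4 * γ ^ 2) := by
    nlinarith [sq_nonneg (‖w‖ ^ 2 - ⟪w, u⟫)]
  have hcos : Real.cos (angle w u) * ‖w‖ = ⟪w, u⟫ := by
    rw [cos_angle, hu]; field_simp
  have hsin0 : 0 ≤ Real.sin (angle w u) :=
    Real.sin_nonneg_of_nonneg_of_le_pi (angle_nonneg _ _) (angle_le_pi _ _)
  have hsinsq : Real.sin (angle w u) ^ 2 = 1 - Real.cos (angle w u) ^ 2 :=
    Real.sin_sq _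
  have h2 : ⟪w, u⟫ ^ 2 = Real.cos (angle w u) ^ 2 * ‖w‖ ^ 2 := by rw [← hcos]; ring
  have hsle : Real.sin (angle w u) ^ 2 ≤ 4 * γ ^ 2 := by
    nlinarith [mul_pos ha0 ha0]
  constructor
  · nlinarith [sq_nonneg (Real.sin (angle w u) + 2 * γ)]
  · have h1 : (0:ℝ) ≤ 1 - 4 * γ ^ 2 := by nlinarith
    have hsq : Real.sqrt (1 - 4 * γ ^ 2) ^ 2 = 1 - 4 * γ ^ 2 := Real.sq_sqrt h1
    have hsn : 0 ≤ Real.sqrt (1 - 4 * γ ^ 2) := Real.sqrt_nonneg _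
    nlinarith [mul_nonneg ha0.le hsn, sq_nonneg (⟪w, u⟫ - ‖w‖ * Real.sqrt (1 - 4 * γ ^ 2))]
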